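/- arXiv:2502.20338 — 2 statements merged into one kernel-verified Lean document; each statement's English description precedes it below -/
import Mathlib

section
/- If P[s..L-1] occurs in T but P[s-1..L-1] does not occur in T (for some 1 ≤ s ≤ L-1), then no MEM of P with respect to T of length at least L starts at any position before s; hence all MEMs of length ≥ L are substrings of P[s..|P|-1]. -/
open List

variable {α : Type*}

/-- `substr P i j` is the substring `P[i..j]` (inclusive indices). -/
def substr (P : List α) (i j : ℕ) : List α := (P.drop i).take (j - i + 1)

/-- `IsMEM T P i j` : `P[i..j]` is a maximal exact match of `P` w.r.t. `T`:
it occurs in `T`, and it can be extended neither to the left nor to the right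
within `P` while still occurring in `T`. -/
def IsMEM (T P : List α) (i j : ℕ) : Prop :=
  i ≤ j ∧ j < P.length ∧ substr P i j <:+: T ∧
  (i = 0 ∨ ¬ substr P (i - 1) j <:+: T) ∧
  (j = P.length - 1 ∨ ¬ substr P i (j + 1) <:+: T)

/-- All length-`k` substrings (`k`-mers) of `S` pass the filter `F`. -/
def kmersPass (F : List α → Bool) (k : ℕ) (S : List α) : Prop :=
  ∀ w : List α, w.length = k → w <:+: S → F w = true

/-- `IsPseudoMEM F k L P i j` : `P[i..j]` is a maximal substring of `P` of length
at least `L` all of whose `k`-mers pass the filter `F`. -/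
def IsPseudoMEM (F : List α → Bool) (k L : ℕ) (P : List α) (i j : ℕ) : Prop :=
  i ≤ j ∧ j < P.length ∧ L ≤ j - i + 1 ∧ kmersPass F k (substr P i j) ∧
  (i = 0 ∨ ¬ kmersPass F k (substr P (i - 1) j)) ∧
  (j = P.length - 1 ∨ ¬ kmersPass F k (substr P i (j + 1)))

/-- `F` has no false negatives for the `k`-mers of `T`. -/
def NoFalseNeg (F : List α → Bool) (k : ℕ) (T : List α) : Prop :=
  ∀ w : List α, w.length = k → w <:+: T → F w = true

lemma substr_infix (P : List α) {i j i' j' : ℕ} (h1 : i ≤ i') (h2 : j' ≤ j) (h3 : i' ≤ j') :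
    substr P i' j' <:+: substr P i j := by
  obtain ⟨d, rfl⟩ := Nat.exists_eq_add_of_le h1
  have heq : substr P (i + d) j' = ((substr P i j).drop d).take (j' - (i + d) + 1) := by
    unfold substr
    rw [List.drop_take, List.take_take, List.drop_drop]
    congr 1
    omega
  rw [heq]
  exact ((List.take_prefix _ _).isInfix).trans ((List.drop_suffix _ _).isInfix)

/-- BML correctness: if `P[s..L-1]` occurs in `T` but
`P[s-1..L-1]` does not, then no MEM of length at least `L` starts before `s`;
hence all such MEMs are substrings of `P[s..|P|-1]`. -/
theorem bml_skip_correct (T P : List α) (L s : ℕ)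
    (hs : 1 ≤ s) (hsL : s ≤ L - 1) (hLP : L ≤ P.length)
    (hocc : substr P s (L - 1) <:+: T)
    (hnocc : ¬ substr P (s - 1) (L - 1) <:+: T) :
    ∀ i j, IsMEM T P i j → L ≤ j - i + 1 → s ≤ i := by
  intro i j hmem hlen
  by_contra h
  push_neg at h
  obtain ⟨hij, hjP, hinf, _, _⟩ := hmem
  exact hnocc ((substr_infix P (by omega) (by omega) (by omega)).trans hinf)
end

section
/- Suppose the pseudo-MEMs of a pattern are processed in non-increasing order of length, and within each pseudo-MEM all MEMs of length ≥ L contained in it are found. If at some point t MEMs of length at least ℓ have been found, where ℓ is the length of the next unprocessed pseudo-MEM, then the t longest MEMs of length ≥ L of P have all already been found (any MEM contained in an unprocessed pseudo-MEM has length at most ℓ). -/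
open List

variable {α : Type*}

lemma substr_infix_substr {P : List α} {i j i' j' : ℕ} (h1 : i ≤ i') (h2 : i' ≤ j') (h3 : j' ≤ j) :
    substr P i' j' <:+: substr P i j := by
  have hdrop : P.drop i' = (P.drop i).drop (i' - i) := by
    rw [List.drop_drop]; congr 1; omega
  unfold substr
  rw [hdrop]
  set l := P.drop i with hl
  have key : (l.drop (i' - i)).take (j' - i' + 1) <:+:
      l.take ((i' - i) + (j' - i' + 1)) := by
    conv_rhs => rw [List.take_add]
    exact (List.suffix_append _ _).isInfix
  refine key.trans ?_
  have hle : (i' - i) + (j' - i' + 1) ≤ j - i + 1 := by omega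
  have : l.take ((i' - i) + (j' - i' + 1)) <+: l.take (j - i + 1) := by
    have := List.take_prefix ((i' - i) + (j' - i' + 1)) (l.take (j - i + 1))
    rwa [List.take_take, Nat.min_eq_left hle] at this
  exact this.isInfix

lemma kmersPass_mono {F : List α → Bool} {k : ℕ} {S S' : List α}
    (h : S' <:+: S) (hS : kmersPass F k S) : kmersPass F k S' :=
  fun w hw hw' => hS w hw (hw'.trans h)

/-- early-stopping correctness: processing pseudo-MEMs in
non-increasing order of length (so every unprocessed pseudo-MEM has length at
most `ℓ`) and having found all MEMs of length `≥ L` contained in processed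
pseudo-MEMs, with `t` found MEMs of length at least `ℓ`, every MEM of length
`≥ L` not yet found has length at most `ℓ`: the top-`t` MEMs are found. -/
theorem early_stopping_correct (F : List α → Bool) (k L ℓ t : ℕ) (T P : List α)
    (hk : 1 ≤ k) (hkL : k < L) (hF : NoFalseNeg F k T)
    (processed : ℕ → ℕ → Prop)
    (hunproc : ∀ i j, IsPseudoMEM F k L P i j → ¬ processed i j → j - i + 1 ≤ ℓ)
    (found : Finset (ℕ × ℕ))
    (hfound : ∀ ij ∈ found, IsMEM T P ij.1 ij.2 ∧ L ≤ ij.2 - ij.1 + 1)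
    (hall : ∀ a b, IsMEM T P a b → L ≤ b - a + 1 →
      (∃ i j, IsPseudoMEM F k L P i j ∧ processed i j ∧ i ≤ a ∧ b ≤ j) →
      (a, b) ∈ found)
    (hcard : found.card = t)
    (hlen : ∀ ij ∈ found, ℓ ≤ ij.2 - ij.1 + 1) :
    ∀ a b, IsMEM T P a b → L ≤ b - a + 1 → (a, b) ∉ found → b - a + 1 ≤ ℓ := by
  classical
  intro a b hmem hL hnot
  obtain ⟨hab, hblen, hinT, _, _⟩ := hmem
  -- all k-mers of substr P a b pass
  have hpass : kmersPass F k (substr P a b) :=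
    fun w hw hwin => hF w hw (hwin.trans hinT)
  -- extend left minimally
  set Q : ℕ → Prop := fun i' => kmersPass F k (substr P i' b) with hQ
  have hQa : Q a := hpass
  have hex : ∃ n, Q n := ⟨a, hQa⟩
  set i := Nat.find hex with hi
  have hQi : Q i := Nat.find_spec hex
  have hia : i ≤ a := Nat.find_le hQa
  -- extend right maximally
  set R : ℕ → Prop := fun j' => kmersPass F k (substr P i j') with hR
  have hRb : R b := hQi
  have hblen1 : b ≤ P.length - 1 := by omega
  set j := Nat.findGreatest R (P.length - 1) with hj
  have hbj : b ≤ j := Nat.le_findGreatest hblen1 hRb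
  have hRj : R j := Nat.findGreatest_spec hblen1 hRb
  have hjle : j ≤ P.length - 1 := Nat.findGreatest_le _
  have hjlen : j < P.length := by omega
  -- the pseudo-MEM
  have hpm : IsPseudoMEM F k L P i j := by
    refine ⟨by omega, hjlen, by omega, hRj, ?_, ?_⟩
    · by_cases h0 : i = 0
      · exact Or.inl h0
      · refine Or.inr fun hcon => ?_
        have hlt : i - 1 < i := by omega
        have : ¬ Q (i - 1) := Nat.find_min hex hlt
        exact this (kmersPass_mono (substr_infix_substr le_rfl (by omega) hbj) hcon)
    · by_cases hend : j = P.length - 1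
      · exact Or.inl hend
      · refine Or.inr ?_
        have hng : ¬ R (j + 1) := Nat.findGreatest_is_greatest (P := R) (n := P.length - 1) (by omega) (by omega)
        exact hng
  by_cases hproc : processed i j
  · exact absurd (hall a b ⟨hab, hblen, hinT, ‹_›, ‹_›⟩ hL ⟨i, j, hpm, hproc, hia, hbj⟩) hnot
  · have := hunproc i j hpm hproc
    omega
end
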